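/- One-step variance bounds for the PAGE estimator: In the finite-sum setting, fix x, x' ∈ ℝ^d and h_1,…,h_n ∈ ℝ^d with h = (1/n)∑_{i=1}^n h_i, and let p ∈ (0,1] and B ≥ 1. Let c be a Bernoulli random variable with P(c = 1) = p, and for each i let j_{i,1},…,j_{i,B} be i.i.d. uniform random elements of {1,…,m}, with c and all the j_{i,k} mutually independent. Define h_i' = ∇f_i(x') if c = 1, and h_i' = h_i + (1/B)∑_{k=1}^B (∇f_{i j_{i,k}}(x') − ∇f_{i j_{i,k}}(x)) if c = 0; set h' = (1/n)∑_{i=1}^n h_i'. Then: (1) E[‖h' − ∇f(x')‖²] ≤ ((1−p)L_max²/(nB))‖x' − x‖² + (1−p)‖h − ∇f(x)‖²; (2) for every i, E[‖h_i' − ∇f_i(x')‖²] ≤ ((1−p)L_max²/B)‖x' − x‖² + (1−p)‖h_i − ∇f_i(x)‖²; (3) for every i, E[‖h_i' − h_i‖²] ≤ ((1−p)L_max²/B + 2L_i²)‖x' − x‖² + 2p‖h_i − ∇f_i(x)‖². -/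

import Mathlib

open MeasureTheory ProbabilityTheory
open scoped ENNReal

noncomputable section

section PageAux

open Finset RealInnerProductSpace

lemma page_sum_eval {ι : Type*} [Fintype ι] [DecidableEq ι] {m : ℕ} {A : Type*} [AddCommMonoid A]
    (i0 : ι) (v : Fin m → A) :
    ∑ σ : ι → Fin m, v (σ i0)
      = (Fintype.card ({ j : ι // j ≠ i0 } → Fin m)) • ∑ j, v j := by
  rw [← Equiv.sum_comp (Equiv.funSplitAt i0 (Fin m)).symm (fun σ => v (σ i0))]
  have key : ∀ x : Fin m × ({ j : ι // j ≠ i0 } → Fin m),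
      ((Equiv.funSplitAt i0 (Fin m)).symm x) i0 = x.1 := by
    intro x; simp [Equiv.funSplitAt, Equiv.piSplitAt]
  calc ∑ x : Fin m × ({ j : ι // j ≠ i0 } → Fin m),
        v (((Equiv.funSplitAt i0 (Fin m)).symm x) i0)
      = ∑ x : Fin m × ({ j : ι // j ≠ i0 } → Fin m), v x.1 := by
        apply Finset.sum_congr rfl; intro x _; rw [key]
    _ = ∑ j : Fin m, ∑ _t : ({ j : ι // j ≠ i0 } → Fin m), v j := by
        rw [Fintype.sum_prod_type]
    _ = _ := by
        rw [Finset.smul_sum]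
        apply Finset.sum_congr rfl; intro j _
        rw [Finset.sum_const, Fintype.card]

variable {E : Type*} [NormedAddCommGroup E] [InnerProductSpace ℝ E]

lemma page_sum_eval_pair_zero {ι : Type*} [Fintype ι] [DecidableEq ι] {m : ℕ}
    (i0 i1 : ι) (hne : i1 ≠ i0) (u v : Fin m → E) (hv : ∑ j, v j = 0) :
    ∑ σ : ι → Fin m, ⟪u (σ i0), v (σ i1)⟫ = 0 := by
  rw [← Equiv.sum_comp (Equiv.funSplitAt i0 (Fin m)).symm
    (fun σ => ⟪u (σ i0), v (σ i1)⟫)]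
  have key0 : ∀ x : Fin m × ({ j : ι // j ≠ i0 } → Fin m),
      ((Equiv.funSplitAt i0 (Fin m)).symm x) i0 = x.1 := by
    intro x; simp [Equiv.funSplitAt, Equiv.piSplitAt]
  have key1 : ∀ x : Fin m × ({ j : ι // j ≠ i0 } → Fin m),
      ((Equiv.funSplitAt i0 (Fin m)).symm x) i1 = x.2 ⟨i1, hne⟩ := by
    intro x; simp [Equiv.funSplitAt, Equiv.piSplitAt, hne]
  have step : ∀ x : Fin m × ({ j : ι // j ≠ i0 } → Fin m),
      ⟪u (((Equiv.funSplitAt i0 (Fin m)).symm x) i0),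
        v (((Equiv.funSplitAt i0 (Fin m)).symm x) i1)⟫
      = ⟪u x.1, v (x.2 ⟨i1, hne⟩)⟫ := by
    intro x; rw [key0, key1]
  calc ∑ x : Fin m × ({ j : ι // j ≠ i0 } → Fin m),
        ⟪u (((Equiv.funSplitAt i0 (Fin m)).symm x) i0),
          v (((Equiv.funSplitAt i0 (Fin m)).symm x) i1)⟫
      = ∑ x : Fin m × ({ j : ι // j ≠ i0 } → Fin m), ⟪u x.1, v (x.2 ⟨i1, hne⟩)⟫ := by
        apply Finset.sum_congr rfl; intro x _; rw [step]
    _ = ∑ j : Fin m, ∑ t : ({ j : ι // j ≠ i0 } → Fin m), ⟪u j, v (t ⟨i1, hne⟩)⟫ := by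
        rw [Fintype.sum_prod_type]
    _ = ∑ j : Fin m, ⟪u j, ∑ t : ({ j : ι // j ≠ i0 } → Fin m), v (t ⟨i1, hne⟩)⟫ := by
        apply Finset.sum_congr rfl; intro j _; rw [inner_sum]
    _ = 0 := by
        have : ∑ t : ({ j : ι // j ≠ i0 } → Fin m), v (t ⟨i1, hne⟩) = 0 := by
          have h2 := page_sum_eval (ι := { j : ι // j ≠ i0 }) ⟨i1, hne⟩ v
          rw [hv, smul_zero] at h2; exact h2
        simp [this]

lemma page_card_aux {ι : Type*} [Fintype ι] [DecidableEq ι] {m : ℕ} (hm : 1 ≤ m) (i0 : ι) :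
    (Fintype.card ({ j : ι // j ≠ i0 } → Fin m) : ℝ)
      = (m:ℝ) ^ (Fintype.card ι) * (m:ℝ)⁻¹ := by
  have h1 : Fintype.card { j : ι // j ≠ i0 } = Fintype.card ι - 1 := by
    rw [Fintype.card_subtype_compl, Fintype.card_subtype_eq]
  have hN : 1 ≤ Fintype.card ι := Fintype.card_pos_iff.mpr ⟨i0⟩
  have hm0 : (m:ℝ) ≠ 0 := by positivity
  rw [Fintype.card_fun, h1, Fintype.card_fin]
  push_cast
  rw [pow_sub₀ _ hm0 hN]
  field_simp

lemma page_L1 {ι : Type*} [Fintype ι] [DecidableEq ι] {m : ℕ} (hm : 1 ≤ m)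
    (a : E) (g : ι → Fin m → E) (hg : ∀ i, ∑ j, g i j = 0) :
    ∑ σ : ι → Fin m, ‖a + ∑ i, g i (σ i)‖ ^ 2
      = (m:ℝ) ^ (Fintype.card ι) * ‖a‖ ^ 2
        + (m:ℝ) ^ (Fintype.card ι) * (m:ℝ)⁻¹ * ∑ i, ∑ j, ‖g i j‖ ^ 2 := by
  classical
  have hcard : ∀ i0 : ι, (Fintype.card ({ j : ι // j ≠ i0 } → Fin m) : ℝ)
      = (m:ℝ) ^ (Fintype.card ι) * (m:ℝ)⁻¹ := page_card_aux hm
  have expand : ∀ σ : ι → Fin m, ‖a + ∑ i, g i (σ i)‖ ^ 2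
      = ‖a‖ ^ 2 + 2 * ⟪a, ∑ i, g i (σ i)⟫ + ‖∑ i, g i (σ i)‖ ^ 2 :=
    fun σ => norm_add_sq_real _ _
  calc ∑ σ : ι → Fin m, ‖a + ∑ i, g i (σ i)‖ ^ 2
      = ∑ σ : ι → Fin m, (‖a‖ ^ 2 + 2 * ⟪a, ∑ i, g i (σ i)⟫ + ‖∑ i, g i (σ i)‖ ^ 2) :=
        Finset.sum_congr rfl fun σ _ => expand σ
    _ = (∑ _σ : ι → Fin m, ‖a‖ ^ 2) + (∑ σ : ι → Fin m, 2 * ⟪a, ∑ i, g i (σ i)⟫)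
        + ∑ σ : ι → Fin m, ‖∑ i, g i (σ i)‖ ^ 2 := by
        rw [Finset.sum_add_distrib, Finset.sum_add_distrib]
    _ = (m:ℝ) ^ (Fintype.card ι) * ‖a‖ ^ 2 + 0
        + (m:ℝ) ^ (Fintype.card ι) * (m:ℝ)⁻¹ * ∑ i, ∑ j, ‖g i j‖ ^ 2 := by
        congr 2
        · rw [Finset.sum_const, nsmul_eq_mul, Finset.card_univ, Fintype.card_fun,
            Fintype.card_fin]
          push_cast; ring
        · rw [← Finset.mul_sum]
          have : ∑ σ : ι → Fin m, ⟪a, ∑ i, g i (σ i)⟫ = 0 := by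
            calc ∑ σ : ι → Fin m, ⟪a, ∑ i, g i (σ i)⟫
                = ∑ σ : ι → Fin m, ∑ i, ⟪a, g i (σ i)⟫ :=
                  Finset.sum_congr rfl fun σ _ => inner_sum _ _ _
              _ = ∑ i, ∑ σ : ι → Fin m, ⟪a, g i (σ i)⟫ := Finset.sum_comm
              _ = 0 := by
                  apply Finset.sum_eq_zero; intro i _
                  have h3 : ∑ j : Fin m, ⟪a, g i j⟫ = 0 := by
                    rw [← inner_sum, hg i, inner_zero_right]
                  have h2 := page_sum_eval (ι := ι) i (fun j => ⟪a, g i j⟫)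
                  simp only [h3, smul_zero] at h2
                  exact h2
          rw [this, mul_zero]
        · calc ∑ σ : ι → Fin m, ‖∑ i, g i (σ i)‖ ^ 2
              = ∑ σ : ι → Fin m, ∑ i, ∑ i', ⟪g i (σ i), g i' (σ i')⟫ := by
                apply Finset.sum_congr rfl; intro σ _
                rw [← real_inner_self_eq_norm_sq, sum_inner]
                apply Finset.sum_congr rfl; intro i _
                exact inner_sum _ _ _
            _ = ∑ i, ∑ i', ∑ σ : ι → Fin m, ⟪g i (σ i), g i' (σ i')⟫ := by
                rw [Finset.sum_comm]
                apply Finset.sum_congr rfl; intro i _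
                exact Finset.sum_comm
            _ = ∑ i, ((m:ℝ) ^ (Fintype.card ι) * (m:ℝ)⁻¹ * ∑ j, ‖g i j‖ ^ 2) := by
                apply Finset.sum_congr rfl; intro i _
                rw [Finset.sum_eq_single i]
                · have h2 := page_sum_eval (ι := ι) i (fun j => ⟪g i j, g i j⟫)
                  rw [nsmul_eq_mul] at h2
                  rw [h2, hcard i]
                  congr 1
                  apply Finset.sum_congr rfl; intro j _
                  exact real_inner_self_eq_norm_sq _
                · intro i' _ hne
                  exact page_sum_eval_pair_zero i i' hne (g i) (g i') (hg i')
                · intro hmem; exact absurd (Finset.mem_univ i) hmem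
            _ = (m:ℝ) ^ (Fintype.card ι) * (m:ℝ)⁻¹ * ∑ i, ∑ j, ‖g i j‖ ^ 2 := by
                rw [Finset.mul_sum]
    _ = _ := by ring

lemma page_gradient_const_mul_sum {d : ℕ} {κ : Type*} [Fintype κ]
    (g : κ → EuclideanSpace ℝ (Fin d) → ℝ) (hg : ∀ t, Differentiable ℝ (g t))
    (a : ℝ) (z : EuclideanSpace ℝ (Fin d)) :
    gradient (fun y => a * ∑ t, g t y) z = a • ∑ t, gradient (g t) z := by
  have hsum : DifferentiableAt ℝ (fun y => ∑ t, g t y) z :=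
    DifferentiableAt.fun_sum (fun t _ => (hg t).differentiableAt)
  unfold gradient
  rw [fderiv_const_mul hsum, fderiv_fun_sum (fun t _ => (hg t).differentiableAt),
    _root_.map_smul, _root_.map_sum]

lemma page_var_bound {m : ℕ} (Δ : Fin m → E) (D : E)
    (hD : ∑ j, Δ j = (m:ℝ) • D) :
    ∑ j, ‖Δ j - D‖ ^ 2 ≤ ∑ j, ‖Δ j‖ ^ 2 := by
  have expand : ∀ j, ‖Δ j - D‖ ^ 2 = ‖Δ j‖ ^ 2 - 2 * ⟪Δ j, D⟫ + ‖D‖ ^ 2 :=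
    fun j => norm_sub_sq_real _ _
  have hsum : ∑ j, ⟪Δ j, D⟫ = (m:ℝ) * ‖D‖ ^ 2 := by
    rw [← sum_inner, hD, real_inner_smul_left, real_inner_self_eq_norm_sq]
  have hDsq : (0:ℝ) ≤ ‖D‖ ^ 2 := by positivity
  calc ∑ j, ‖Δ j - D‖ ^ 2
      = ∑ j, (‖Δ j‖ ^ 2 - 2 * ⟪Δ j, D⟫ + ‖D‖ ^ 2) :=
        Finset.sum_congr rfl fun j _ => expand j
    _ = (∑ j, ‖Δ j‖ ^ 2) - 2 * ((m:ℝ) * ‖D‖ ^ 2) + (m:ℝ) * ‖D‖ ^ 2 := by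
        rw [Finset.sum_add_distrib, Finset.sum_sub_distrib, ← Finset.mul_sum, hsum,
          Finset.sum_const, Finset.card_univ, Fintype.card_fin, nsmul_eq_mul]
    _ ≤ ∑ j, ‖Δ j‖ ^ 2 := by nlinarith [hDsq, Nat.cast_nonneg (α := ℝ) m]

lemma page_sq_add (u v : E) : ‖u + v‖ ^ 2 ≤ 2 * ‖u‖ ^ 2 + 2 * ‖v‖ ^ 2 := by
  have h2 : ‖u + v‖ ^ 2 ≤ (‖u‖ + ‖v‖) ^ 2 :=
    pow_le_pow_left₀ (norm_nonneg _) (norm_add_le u v) 2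
  nlinarith [h2, sq_nonneg (‖u‖ - ‖v‖)]

end PageAux

set_option maxHeartbeats 1000000 in
/-- **One-step variance bounds for the PAGE estimator** (finite-sum setting). -/
theorem page_one_step_variance_bounds
    (d n m B : ℕ) (hd : 1 ≤ d) (hn : 1 ≤ n) (hm : 1 ≤ m) (hB : 1 ≤ B)
    (fij : Fin n → Fin m → EuclideanSpace ℝ (Fin d) → ℝ)
    (fi : Fin n → EuclideanSpace ℝ (Fin d) → ℝ)
    (hfidef : ∀ i z, fi i z = (m : ℝ)⁻¹ * ∑ j, fij i j z)
    (f : EuclideanSpace ℝ (Fin d) → ℝ)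
    (hfdef : ∀ z, f z = (n : ℝ)⁻¹ * ∑ i, fi i z)
    (hdiffij : ∀ i j, Differentiable ℝ (fij i j))
    (Li : Fin n → ℝ)
    (hLi : ∀ i x y, ‖gradient (fi i) x - gradient (fi i) y‖ ≤ Li i * ‖x - y‖)
    (Lij : Fin n → Fin m → ℝ)
    (hLij : ∀ i j x y,
      ‖gradient (fij i j) x - gradient (fij i j) y‖ ≤ Lij i j * ‖x - y‖)
    (Lmax : ℝ) (hLmax : ∀ i j, Lij i j ≤ Lmax)
    {Ω : Type*} [MeasurableSpace Ω] (μ : Measure Ω) [IsProbabilityMeasure μ]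
    (p : ℝ) (hp0 : 0 < p) (hp1 : p ≤ 1)
    (c : Ω → Bool) (hcmeas : Measurable c)
    (hclaw : μ {ω | c ω = true} = ENNReal.ofReal p)
    (J : Fin n → Fin B → Ω → Fin m)
    (hJmeas : ∀ i k, Measurable (J i k))
    (hJlaw : ∀ i k (jv : Fin m), μ {ω | J i k ω = jv} = (m : ℝ≥0∞)⁻¹)
    (hindep : iIndep (fun o : Option (Fin n × Fin B) =>
      match o with
      | none => MeasurableSpace.comap c inferInstance
      | some (i, k) => MeasurableSpace.comap (J i k) inferInstance) μ)
    (x x' : EuclideanSpace ℝ (Fin d))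
    (h : Fin n → EuclideanSpace ℝ (Fin d))
    (h' : Fin n → Ω → EuclideanSpace ℝ (Fin d))
    (hh' : ∀ i ω, h' i ω =
      if c ω = true then gradient (fi i) x'
      else h i + (B : ℝ)⁻¹ • ∑ k : Fin B,
        (gradient (fij i (J i k ω)) x' - gradient (fij i (J i k ω)) x)) :
    ((∫ ω, ‖(n : ℝ)⁻¹ • ∑ i, h' i ω - gradient f x'‖ ^ 2 ∂μ)
      ≤ (1 - p) * Lmax ^ 2 / (n * B) * ‖x' - x‖ ^ 2
        + (1 - p) * ‖(n : ℝ)⁻¹ • ∑ i, h i - gradient f x‖ ^ 2) ∧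
    (∀ i, (∫ ω, ‖h' i ω - gradient (fi i) x'‖ ^ 2 ∂μ)
      ≤ (1 - p) * Lmax ^ 2 / B * ‖x' - x‖ ^ 2
        + (1 - p) * ‖h i - gradient (fi i) x‖ ^ 2) ∧
    (∀ i, (∫ ω, ‖h' i ω - h i‖ ^ 2 ∂μ)
      ≤ ((1 - p) * Lmax ^ 2 / B + 2 * Li i ^ 2) * ‖x' - x‖ ^ 2
        + 2 * p * ‖h i - gradient (fi i) x‖ ^ 2) := by
  classical
  set T : Ω → Bool × ((Fin n × Fin B) → Fin m) := fun ω => (c ω, fun ik => J ik.1 ik.2 ω)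
    with hT
  have hTmeas : Measurable T := by
    apply Measurable.prod
    · exact hcmeas
    · exact measurable_pi_lambda _ (fun ik => hJmeas ik.1 ik.2)
  -- the law of T
  have hfalse : μ (c ⁻¹' {false}) = ENNReal.ofReal (1 - p) := by
    have hcompl : c ⁻¹' {false} = (c ⁻¹' {true})ᶜ := by
      ext ω; by_cases hb : c ω <;> simp [hb]
    have htrue : μ (c ⁻¹' {true}) = ENNReal.ofReal p := hclaw
    rw [hcompl, prob_compl_eq_one_sub (hcmeas (measurableSet_singleton true)), htrue,
      ENNReal.ofReal_sub 1 hp0.le, ENNReal.ofReal_one]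
  have hatom : ∀ s : Bool × ((Fin n × Fin B) → Fin m), μ (T ⁻¹' {s})
      = (if s.1 = true then ENNReal.ofReal p else ENNReal.ofReal (1 - p))
        * ((m : ℝ≥0∞)⁻¹) ^ (n * B) := by
    intro s
    set Ev : Option (Fin n × Fin B) → Set Ω := fun o =>
      match o with
      | none => c ⁻¹' {s.1}
      | some ik => (J ik.1 ik.2) ⁻¹' {s.2 ik} with hEv
    have hpre : T ⁻¹' {s} = ⋂ o, Ev o := by
      ext ω
      simp only [Set.mem_preimage, Set.mem_singleton_iff, Set.mem_iInter, hT, Prod.ext_iff,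
        funext_iff, Option.forall, hEv]
    have hmeasEv : ∀ o, MeasurableSet[(fun o : Option (Fin n × Fin B) =>
        match o with
        | none => MeasurableSpace.comap c inferInstance
        | some (i, k) => MeasurableSpace.comap (J i k) inferInstance) o] (Ev o) := by
      rintro (_ | ⟨i, k⟩)
      · exact ⟨{s.1}, measurableSet_singleton _, rfl⟩
      · exact ⟨{s.2 (i, k)}, measurableSet_singleton _, rfl⟩
    rw [hpre, hindep.meas_iInter hmeasEv, Fintype.prod_option]
    have h1 : μ (Ev none) = (if s.1 = true then ENNReal.ofReal p else ENNReal.ofReal (1 - p)) := by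
      have hEvnone : Ev none = c ⁻¹' {s.1} := rfl
      have htrue : c ⁻¹' {true} = {ω | c ω = true} := by ext ω; simp
      rw [hEvnone]
      rcases Bool.eq_false_or_eq_true s.1 with hb | hb <;> rw [hb]
      · simpa [htrue] using hclaw
      · simpa using hfalse
    have h2 : ∀ ik : Fin n × Fin B, μ (Ev (some ik)) = (m : ℝ≥0∞)⁻¹ := by
      rintro ⟨i, k⟩
      exact hJlaw i k (s.2 (i, k))
    rw [h1]
    congr 1
    rw [Finset.prod_congr rfl (fun ik _ => h2 ik), Finset.prod_const, Finset.card_univ]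
    congr 1
    simp
  -- reduction of integrals to finite sums
  have hmapT : IsProbabilityMeasure (μ.map T) := Measure.isProbabilityMeasure_map hTmeas.aemeasurable
  have key : ∀ G : Bool × ((Fin n × Fin B) → Fin m) → ℝ, ∫ ω, G (T ω) ∂μ
      = p * ∑ σ : (Fin n × Fin B) → Fin m, ((m:ℝ)⁻¹) ^ (n * B) * G (true, σ)
        + (1 - p) * ∑ σ : (Fin n × Fin B) → Fin m, ((m:ℝ)⁻¹) ^ (n * B) * G (false, σ) := by
    intro G
    have hGmeas : AEStronglyMeasurable G (μ.map T) :=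
      (Measurable.of_discrete (f := G)).aestronglyMeasurable
    rw [← integral_map hTmeas.aemeasurable hGmeas,
      integral_fintype (Integrable.of_finite)]
    have hw : ∀ s : Bool × ((Fin n × Fin B) → Fin m), ((μ.map T) {s}).toReal
        = (if s.1 = true then p else 1 - p) * ((m:ℝ)⁻¹) ^ (n * B) := by
      intro s
      rw [Measure.map_apply hTmeas (measurableSet_singleton s), hatom s]
      rw [ENNReal.toReal_mul]
      congr 1
      · by_cases hb : s.1 = true <;>
          simp [hb, ENNReal.toReal_ofReal, hp0.le, sub_nonneg.mpr hp1]
      · simp [ENNReal.toReal_pow, ENNReal.toReal_inv]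
    calc ∑ s : Bool × ((Fin n × Fin B) → Fin m), ((μ.map T) {s}).toReal • G s
        = ∑ s : Bool × ((Fin n × Fin B) → Fin m), (if s.1 = true then p else 1 - p) * ((m:ℝ)⁻¹) ^ (n * B) * G s := by
          apply Finset.sum_congr rfl; intro s _; rw [hw s, smul_eq_mul]
      _ = _ := by
          rw [Fintype.sum_prod_type, Fintype.sum_bool]
          simp only [if_true, if_false, Bool.false_eq_true]
          rw [Finset.mul_sum, Finset.mul_sum]
          congr 1 <;> · apply Finset.sum_congr rfl; intro σ _; ring
  -- basic facts
  have hm0 : (m:ℝ) ≠ 0 := by positivity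
  have hn0 : (n:ℝ) ≠ 0 := by positivity
  have hB0 : (B:ℝ) ≠ 0 := by positivity
  have hp1' : (0:ℝ) ≤ 1 - p := by linarith
  have hX : (0:ℝ) ≤ ‖x' - x‖ ^ 2 := by positivity
  -- gradients
  have hdfi : ∀ i, Differentiable ℝ (fi i) := by
    intro i
    have e : fi i = fun y => (m:ℝ)⁻¹ * ∑ j, fij i j y := funext (hfidef i)
    rw [e]
    exact Differentiable.const_mul (Differentiable.fun_sum fun j _ => hdiffij i j) _
  have hgfi : ∀ i z, gradient (fi i) z = (m:ℝ)⁻¹ • ∑ j, gradient (fij i j) z := by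
    intro i z
    have e : fi i = fun y => (m:ℝ)⁻¹ * ∑ j, fij i j y := funext (hfidef i)
    rw [e, page_gradient_const_mul_sum _ (fun j => hdiffij i j)]
  have hgf : ∀ z, gradient f z = (n:ℝ)⁻¹ • ∑ i, gradient (fi i) z := by
    intro z
    have e : f = fun y => (n:ℝ)⁻¹ * ∑ i, fi i y := funext hfdef
    rw [e, page_gradient_const_mul_sum _ hdfi]
  set Δ : Fin n → Fin m → EuclideanSpace ℝ (Fin d) :=
    fun i j => gradient (fij i j) x' - gradient (fij i j) x with hΔdef
  set Db : Fin n → EuclideanSpace ℝ (Fin d) :=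
    fun i => gradient (fi i) x' - gradient (fi i) x with hDbdef
  have hΔ : ∀ i j, gradient (fij i j) x' - gradient (fij i j) x = Δ i j := fun _ _ => rfl
  have hDb : ∀ i, Db i = gradient (fi i) x' - gradient (fi i) x := fun _ => rfl
  have hsumΔ : ∀ i, ∑ j, Δ i j = (m:ℝ) • Db i := by
    intro i
    have e1 : ∑ j, Δ i j = (∑ j, gradient (fij i j) x') - ∑ j, gradient (fij i j) x := by
      rw [← Finset.sum_sub_distrib]
    rw [e1, hDb, hgfi i x', hgfi i x, smul_sub, smul_smul, smul_smul,
      mul_inv_cancel₀ hm0, one_smul, one_smul]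
  have hcent : ∀ i, ∑ j, (Δ i j - Db i) = 0 := by
    intro i
    rw [Finset.sum_sub_distrib, hsumΔ i, Finset.sum_const, Finset.card_univ, Fintype.card_fin,
      ← Nat.cast_smul_eq_nsmul ℝ, sub_self]
  have hΔb : ∀ i j, ‖Δ i j‖ ^ 2 ≤ Lmax ^ 2 * ‖x' - x‖ ^ 2 := by
    intro i j
    have h1 : ‖Δ i j‖ ≤ Lmax * ‖x' - x‖ :=
      le_trans (hLij i j x' x) (mul_le_mul_of_nonneg_right (hLmax i j) (norm_nonneg _))
    have h2 := pow_le_pow_left₀ (norm_nonneg _) h1 2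
    rw [mul_pow] at h2; exact h2
  have hvar : ∀ i, ∑ j, ‖Δ i j - Db i‖ ^ 2 ≤ (m:ℝ) * (Lmax ^ 2 * ‖x' - x‖ ^ 2) := by
    intro i
    refine le_trans (page_var_bound (fun j => Δ i j) (Db i) (hsumΔ i)) ?_
    calc ∑ j, ‖Δ i j‖ ^ 2 ≤ ∑ _j : Fin m, Lmax ^ 2 * ‖x' - x‖ ^ 2 :=
          Finset.sum_le_sum fun j _ => hΔb i j
      _ = (m:ℝ) * (Lmax ^ 2 * ‖x' - x‖ ^ 2) := by
          rw [Finset.sum_const, Finset.card_univ, Fintype.card_fin, nsmul_eq_mul]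
  have hDbnorm : ∀ i, ‖Db i‖ ^ 2 ≤ Li i ^ 2 * ‖x' - x‖ ^ 2 := by
    intro i
    have h2 := pow_le_pow_left₀ (norm_nonneg _) (hLi i x' x) 2
    rw [mul_pow] at h2; exact h2
  have hcardfn : Fintype.card ((Fin n × Fin B) → Fin m) = m ^ (n * B) := by
    rw [Fintype.card_fun]; simp
  have hqm : ((m:ℝ)⁻¹) ^ (n * B) * (m:ℝ) ^ (n * B) = 1 := by
    rw [← mul_pow, inv_mul_cancel₀ hm0, one_pow]
  have hconst : ∀ r : ℝ, ∑ _σ : (Fin n × Fin B) → Fin m, ((m:ℝ)⁻¹) ^ (n * B) * r = r := by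
    intro r
    rw [Finset.sum_const, Finset.card_univ, hcardfn, nsmul_eq_mul]
    push_cast
    linear_combination r * hqm
  have hcardι : Fintype.card (Fin n × Fin B) = n * B := by simp
  have hL1' : ∀ (a : EuclideanSpace ℝ (Fin d))
      (g : (Fin n × Fin B) → Fin m → EuclideanSpace ℝ (Fin d)),
      (∀ ik, ∑ j, g ik j = 0) →
      ∑ σ : (Fin n × Fin B) → Fin m, ((m:ℝ)⁻¹) ^ (n * B) * ‖a + ∑ ik, g ik (σ ik)‖ ^ 2
        = ‖a‖ ^ 2 + (m:ℝ)⁻¹ * ∑ ik, ∑ j, ‖g ik j‖ ^ 2 := by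
    intro a g hg
    rw [← Finset.mul_sum, page_L1 hm a g hg, hcardι]
    linear_combination (‖a‖ ^ 2 + (m:ℝ)⁻¹ * ∑ ik, ∑ j, ‖g ik j‖ ^ 2) * hqm
  have hnsq : ∀ (r : ℝ) (v : EuclideanSpace ℝ (Fin d)), ‖r • v‖ ^ 2 = r ^ 2 * ‖v‖ ^ 2 := by
    intro r v
    rw [norm_smul, mul_pow, Real.norm_eq_abs, sq_abs]
  have hgfx' : (n:ℝ)⁻¹ • ∑ i', Db i' = gradient f x' - gradient f x := by
    have e1 : ∑ i', Db i' = (∑ i', gradient (fi i') x') - ∑ i', gradient (fi i') x := by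
      rw [← Finset.sum_sub_distrib]
    rw [hgf x', hgf x, e1, smul_sub]
  -- the shared per-node estimator pieces
  have hggcent : ∀ i : Fin n, ∀ ik : Fin n × Fin B,
      ∑ j, (if ik.1 = i then (B:ℝ)⁻¹ • (Δ i j - Db i) else 0) = 0 := by
    intro i ik
    by_cases hii : ik.1 = i
    · simp only [hii, if_true, ← Finset.smul_sum, hcent i, smul_zero]
    · simp [hii]
  have hggsum : ∀ (i : Fin n) (σ : (Fin n × Fin B) → Fin m),
      ∑ ik : Fin n × Fin B, (if ik.1 = i then (B:ℝ)⁻¹ • (Δ i (σ ik) - Db i) else 0)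
        = (B:ℝ)⁻¹ • (∑ k, Δ i (σ (i,k))) - Db i := by
    intro i σ
    rw [Fintype.sum_prod_type]
    have step : ∀ i' : Fin n,
        ∑ k : Fin B, (if ((i',k) : Fin n × Fin B).1 = i
            then (B:ℝ)⁻¹ • (Δ i (σ (i',k)) - Db i) else 0)
        = if i' = i then ((B:ℝ)⁻¹ • (∑ k, Δ i (σ (i',k))) - Db i) else 0 := by
      intro i'
      by_cases hii : i' = i
      · simp only [hii, if_true]
        rw [← Finset.smul_sum, Finset.sum_sub_distrib, Finset.sum_const, Finset.card_univ,
          Fintype.card_fin, ← Nat.cast_smul_eq_nsmul ℝ, smul_sub, smul_smul,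
          inv_mul_cancel₀ hB0, one_smul]
      · simp [hii]
    rw [Finset.sum_congr rfl (fun i' _ => step i'), Finset.sum_ite_eq' Finset.univ i]
    simp
  have hggnorm : ∀ i : Fin n,
      ∑ ik : Fin n × Fin B, ∑ j, ‖(if ik.1 = i then (B:ℝ)⁻¹ • (Δ i j - Db i) else 0)‖ ^ 2
        = (B:ℝ)⁻¹ * ∑ j, ‖Δ i j - Db i‖ ^ 2 := by
    intro i
    rw [Fintype.sum_prod_type]
    have step : ∀ i' : Fin n,
        ∑ k : Fin B, ∑ j, ‖(if ((i',k) : Fin n × Fin B).1 = i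
            then (B:ℝ)⁻¹ • (Δ i j - Db i) else 0)‖ ^ 2
        = if i' = i then (B:ℝ) * (((B:ℝ)⁻¹) ^ 2 * ∑ j, ‖Δ i j - Db i‖ ^ 2) else 0 := by
      intro i'
      by_cases hii : i' = i
      · simp only [hii, if_true]
        have inner : ∑ j, ‖(B:ℝ)⁻¹ • (Δ i j - Db i)‖ ^ 2
            = ((B:ℝ)⁻¹) ^ 2 * ∑ j, ‖Δ i j - Db i‖ ^ 2 := by
          rw [Finset.mul_sum]
          exact Finset.sum_congr rfl fun j _ => hnsq _ _
        rw [Finset.sum_congr rfl (fun k _ => inner), Finset.sum_const, Finset.card_univ,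
          Fintype.card_fin, nsmul_eq_mul]
      · simp [hii]
    rw [Finset.sum_congr rfl (fun i' _ => step i'), Finset.sum_ite_eq' Finset.univ i]
    simp only [Finset.mem_univ, if_true]
    field_simp
  -- the bound on the sampled-variance term
  have hb2 : ∀ i : Fin n, (m:ℝ)⁻¹ * ((B:ℝ)⁻¹ * ∑ j, ‖Δ i j - Db i‖ ^ 2)
      ≤ Lmax ^ 2 / B * ‖x' - x‖ ^ 2 := by
    intro i
    have h4 : (m:ℝ)⁻¹ * ((B:ℝ)⁻¹ * ∑ j, ‖Δ i j - Db i‖ ^ 2)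
        ≤ (m:ℝ)⁻¹ * ((B:ℝ)⁻¹ * ((m:ℝ) * (Lmax ^ 2 * ‖x' - x‖ ^ 2))) := by
      gcongr
      exact hvar i
    have h5 : (m:ℝ)⁻¹ * ((B:ℝ)⁻¹ * ((m:ℝ) * (Lmax ^ 2 * ‖x' - x‖ ^ 2)))
        = Lmax ^ 2 / B * ‖x' - x‖ ^ 2 := by
      field_simp
    linarith
  refine ⟨?_, ?_, ?_⟩
  · -- part 1
    set gg1 : (Fin n × Fin B) → Fin m → EuclideanSpace ℝ (Fin d) :=
      fun ik j => ((n:ℝ)⁻¹ * (B:ℝ)⁻¹) • (Δ ik.1 j - Db ik.1) with hgg1def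
    set G : Bool × ((Fin n × Fin B) → Fin m) → ℝ := fun s =>
      ‖(n:ℝ)⁻¹ • (∑ i, (if s.1 = true then gradient (fi i) x'
        else h i + (B:ℝ)⁻¹ • ∑ k : Fin B,
          (gradient (fij i (s.2 (i,k))) x' - gradient (fij i (s.2 (i,k))) x)))
        - gradient f x'‖ ^ 2 with hGdef
    have hcent1 : ∀ ik : Fin n × Fin B, ∑ j, gg1 ik j = 0 := by
      intro ik
      simp only [hgg1def]
      rw [← Finset.smul_sum, hcent ik.1, smul_zero]
    have hpt : ∀ ω, ‖(n : ℝ)⁻¹ • ∑ i, h' i ω - gradient f x'‖ ^ 2 = G (T ω) := by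
      intro ω
      rw [show ∑ i, h' i ω = ∑ i, (if c ω = true then gradient (fi i) x'
        else h i + (B:ℝ)⁻¹ • ∑ k : Fin B,
          (gradient (fij i (J i k ω)) x' - gradient (fij i (J i k ω)) x))
        from Finset.sum_congr rfl fun i _ => hh' i ω]
    have htrue1 : ∀ σ : (Fin n × Fin B) → Fin m, G (true, σ) = 0 := by
      intro σ
      have e : G (true, σ) = ‖(n:ℝ)⁻¹ • (∑ i, gradient (fi i) x') - gradient f x'‖ ^ 2 := rfl
      rw [e, ← hgf x', sub_self]
      simp
    have hfalse1 : ∀ σ : (Fin n × Fin B) → Fin m, G (false, σ)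
        = ‖((n:ℝ)⁻¹ • ∑ i', h i' - gradient f x) + ∑ ik, gg1 ik (σ ik)‖ ^ 2 := by
      intro σ
      have h1σ : ∑ ik, gg1 ik (σ ik)
          = (n:ℝ)⁻¹ • ∑ i', ((B:ℝ)⁻¹ • (∑ k, Δ i' (σ (i',k))) - Db i') := by
        rw [Fintype.sum_prod_type, Finset.smul_sum]
        refine Finset.sum_congr rfl fun i' _ => ?_
        have e : ∀ k : Fin B, gg1 (i',k) (σ (i',k))
            = ((n:ℝ)⁻¹ * (B:ℝ)⁻¹) • (Δ i' (σ (i',k)) - Db i') := fun k => rfl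
        rw [Finset.sum_congr rfl (fun k _ => e k), ← Finset.smul_sum, Finset.sum_sub_distrib,
          Finset.sum_const, Finset.card_univ, Fintype.card_fin, ← Nat.cast_smul_eq_nsmul ℝ]
        match_scalars <;> field_simp
        all_goals ring
      have hvec : (n:ℝ)⁻¹ • (∑ i', (h i' + (B:ℝ)⁻¹ • ∑ k, Δ i' (σ (i',k)))) - gradient f x'
          = ((n:ℝ)⁻¹ • ∑ i', h i' - gradient f x)
            + (n:ℝ)⁻¹ • ∑ i', ((B:ℝ)⁻¹ • (∑ k, Δ i' (σ (i',k))) - Db i') := by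
        have e2 : ∑ i', (h i' + (B:ℝ)⁻¹ • ∑ k, Δ i' (σ (i',k)))
            = (∑ i', h i') + ∑ i', (B:ℝ)⁻¹ • ∑ k, Δ i' (σ (i',k)) := Finset.sum_add_distrib
        have e3 : ∑ i', ((B:ℝ)⁻¹ • (∑ k, Δ i' (σ (i',k))) - Db i')
            = (∑ i', (B:ℝ)⁻¹ • ∑ k, Δ i' (σ (i',k))) - ∑ i', Db i' := Finset.sum_sub_distrib _ _
        rw [e2, e3, smul_add, smul_sub, hgfx']
        abel
      rw [hGdef]
      simp only [Bool.false_eq_true, if_false, hΔ]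
      rw [hvec, h1σ]
    have hSS1 : ∑ ik : Fin n × Fin B, ∑ j, ‖gg1 ik j‖ ^ 2
        = ((n:ℝ)⁻¹ * (B:ℝ)⁻¹) ^ 2
          * ∑ ik : Fin n × Fin B, ∑ j, ‖Δ ik.1 j - Db ik.1‖ ^ 2 := by
      rw [Finset.mul_sum]
      refine Finset.sum_congr rfl fun ik _ => ?_
      rw [Finset.mul_sum]
      refine Finset.sum_congr rfl fun j _ => ?_
      simp only [hgg1def]
      exact hnsq _ _
    have hW : ∑ ik : Fin n × Fin B, ∑ j, ‖Δ ik.1 j - Db ik.1‖ ^ 2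
        ≤ (n:ℝ) * ((B:ℝ) * ((m:ℝ) * (Lmax ^ 2 * ‖x' - x‖ ^ 2))) := by
      calc ∑ ik : Fin n × Fin B, ∑ j, ‖Δ ik.1 j - Db ik.1‖ ^ 2
          ≤ ∑ _ik : Fin n × Fin B, (m:ℝ) * (Lmax ^ 2 * ‖x' - x‖ ^ 2) :=
            Finset.sum_le_sum fun ik _ => hvar ik.1
        _ = _ := by
            rw [Finset.sum_const, Finset.card_univ, nsmul_eq_mul, Fintype.card_prod,
              Fintype.card_fin, Fintype.card_fin]
            push_cast; ring
    have hb1 : (m:ℝ)⁻¹ * (((n:ℝ)⁻¹ * (B:ℝ)⁻¹) ^ 2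
        * ∑ ik : Fin n × Fin B, ∑ j, ‖Δ ik.1 j - Db ik.1‖ ^ 2)
        ≤ Lmax ^ 2 / (n * B) * ‖x' - x‖ ^ 2 := by
      have h4 : (m:ℝ)⁻¹ * (((n:ℝ)⁻¹ * (B:ℝ)⁻¹) ^ 2
          * ∑ ik : Fin n × Fin B, ∑ j, ‖Δ ik.1 j - Db ik.1‖ ^ 2)
          ≤ (m:ℝ)⁻¹ * (((n:ℝ)⁻¹ * (B:ℝ)⁻¹) ^ 2
            * ((n:ℝ) * ((B:ℝ) * ((m:ℝ) * (Lmax ^ 2 * ‖x' - x‖ ^ 2))))) := by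
        gcongr
      have h5 : (m:ℝ)⁻¹ * (((n:ℝ)⁻¹ * (B:ℝ)⁻¹) ^ 2
          * ((n:ℝ) * ((B:ℝ) * ((m:ℝ) * (Lmax ^ 2 * ‖x' - x‖ ^ 2)))))
          = Lmax ^ 2 / (n * B) * ‖x' - x‖ ^ 2 := by
        field_simp
      linarith
    calc ∫ ω, ‖(n : ℝ)⁻¹ • ∑ i, h' i ω - gradient f x'‖ ^ 2 ∂μ
        = ∫ ω, G (T ω) ∂μ := integral_congr_ae (Filter.Eventually.of_forall hpt)
      _ = p * ∑ σ : (Fin n × Fin B) → Fin m, ((m:ℝ)⁻¹) ^ (n * B) * G (true, σ)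
          + (1 - p) * ∑ σ : (Fin n × Fin B) → Fin m, ((m:ℝ)⁻¹) ^ (n * B) * G (false, σ) :=
          key G
      _ = (1 - p) * (‖(n:ℝ)⁻¹ • ∑ i', h i' - gradient f x‖ ^ 2
          + (m:ℝ)⁻¹ * ∑ ik, ∑ j, ‖gg1 ik j‖ ^ 2) := by
          rw [Finset.sum_congr rfl (fun σ _ => by rw [htrue1 σ, mul_zero]),
            Finset.sum_const_zero, mul_zero, zero_add,
            Finset.sum_congr rfl (fun σ _ => by rw [hfalse1 σ]),
            hL1' _ gg1 hcent1]
      _ ≤ (1 - p) * Lmax ^ 2 / (n * B) * ‖x' - x‖ ^ 2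
          + (1 - p) * ‖(n : ℝ)⁻¹ • ∑ i, h i - gradient f x‖ ^ 2 := by
          rw [hSS1]
          have t := mul_le_mul_of_nonneg_left hb1 hp1'
          ring_nf at t ⊢
          linarith

  · -- part 2
    intro i
    set gg : (Fin n × Fin B) → Fin m → EuclideanSpace ℝ (Fin d) :=
      fun ik j => if ik.1 = i then (B:ℝ)⁻¹ • (Δ i j - Db i) else 0 with hggdef
    set G : Bool × ((Fin n × Fin B) → Fin m) → ℝ := fun s =>
      ‖(if s.1 = true then gradient (fi i) x'
        else h i + (B:ℝ)⁻¹ • ∑ k : Fin B,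
          (gradient (fij i (s.2 (i,k))) x' - gradient (fij i (s.2 (i,k))) x))
        - gradient (fi i) x'‖ ^ 2 with hGdef
    have hpt : ∀ ω, ‖h' i ω - gradient (fi i) x'‖ ^ 2 = G (T ω) := by
      intro ω; rw [hh' i ω]
    have htrue : ∀ σ : (Fin n × Fin B) → Fin m, G (true, σ) = 0 := by
      intro σ; simp [hGdef]
    have hfalse : ∀ σ : (Fin n × Fin B) → Fin m, G (false, σ)
        = ‖(h i - gradient (fi i) x) + ∑ ik, gg ik (σ ik)‖ ^ 2 := by
      intro σ
      have h1 : ∑ ik, gg ik (σ ik) = (B:ℝ)⁻¹ • (∑ k, Δ i (σ (i,k))) - Db i := hggsum i σ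
      have h2 : gradient (fi i) x' = gradient (fi i) x + Db i := by rw [hDb]; abel
      have h3 : (h i + (B:ℝ)⁻¹ • ∑ k, Δ i (σ (i,k))) - gradient (fi i) x'
          = (h i - gradient (fi i) x) + ((B:ℝ)⁻¹ • (∑ k, Δ i (σ (i,k))) - Db i) := by
        rw [h2]; abel
      rw [hGdef]
      simp only [Bool.false_eq_true, if_false, hΔ]
      rw [h3, h1]
    calc ∫ ω, ‖h' i ω - gradient (fi i) x'‖ ^ 2 ∂μ
        = ∫ ω, G (T ω) ∂μ := integral_congr_ae (Filter.Eventually.of_forall hpt)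
      _ = p * ∑ σ : (Fin n × Fin B) → Fin m, ((m:ℝ)⁻¹) ^ (n * B) * G (true, σ)
          + (1 - p) * ∑ σ : (Fin n × Fin B) → Fin m, ((m:ℝ)⁻¹) ^ (n * B) * G (false, σ) := key G
      _ = (1 - p) * (‖h i - gradient (fi i) x‖ ^ 2
          + (m:ℝ)⁻¹ * ∑ ik, ∑ j, ‖gg ik j‖ ^ 2) := by
          rw [Finset.sum_congr rfl (fun σ _ => by rw [htrue σ, mul_zero]),
            Finset.sum_const_zero, mul_zero, zero_add,
            Finset.sum_congr rfl (fun σ _ => by rw [hfalse σ]),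
            hL1' _ gg (hggcent i)]
      _ ≤ (1 - p) * Lmax ^ 2 / B * ‖x' - x‖ ^ 2 + (1 - p) * ‖h i - gradient (fi i) x‖ ^ 2 := by
          have hSS : ∑ ik, ∑ j, ‖gg ik j‖ ^ 2 = (B:ℝ)⁻¹ * ∑ j, ‖Δ i j - Db i‖ ^ 2 :=
            hggnorm i
          rw [hSS]
          have t := mul_le_mul_of_nonneg_left (hb2 i) hp1'
          ring_nf at t ⊢
          linarith
  · -- part 3
    intro i
    set gg : (Fin n × Fin B) → Fin m → EuclideanSpace ℝ (Fin d) :=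
      fun ik j => if ik.1 = i then (B:ℝ)⁻¹ • (Δ i j - Db i) else 0 with hggdef
    set G : Bool × ((Fin n × Fin B) → Fin m) → ℝ := fun s =>
      ‖(if s.1 = true then gradient (fi i) x'
        else h i + (B:ℝ)⁻¹ • ∑ k : Fin B,
          (gradient (fij i (s.2 (i,k))) x' - gradient (fij i (s.2 (i,k))) x))
        - h i‖ ^ 2 with hGdef
    have hpt : ∀ ω, ‖h' i ω - h i‖ ^ 2 = G (T ω) := by
      intro ω; rw [hh' i ω]
    have htrue : ∀ σ : (Fin n × Fin B) → Fin m,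
        G (true, σ) = ‖gradient (fi i) x' - h i‖ ^ 2 := fun σ => rfl
    have hfalse : ∀ σ : (Fin n × Fin B) → Fin m, G (false, σ)
        = ‖Db i + ∑ ik, gg ik (σ ik)‖ ^ 2 := by
      intro σ
      have h1 : ∑ ik, gg ik (σ ik) = (B:ℝ)⁻¹ • (∑ k, Δ i (σ (i,k))) - Db i := hggsum i σ
      have h3 : (h i + (B:ℝ)⁻¹ • ∑ k, Δ i (σ (i,k))) - h i
          = Db i + ((B:ℝ)⁻¹ • (∑ k, Δ i (σ (i,k))) - Db i) := by abel
      rw [hGdef]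
      simp only [Bool.false_eq_true, if_false, hΔ]
      rw [h3, h1]
    have hCt : ‖gradient (fi i) x' - h i‖ ^ 2
        ≤ 2 * (Li i ^ 2 * ‖x' - x‖ ^ 2) + 2 * ‖h i - gradient (fi i) x‖ ^ 2 := by
      have hv : gradient (fi i) x' - h i = Db i + (gradient (fi i) x - h i) := by
        rw [hDb]; abel
      calc ‖gradient (fi i) x' - h i‖ ^ 2
          = ‖Db i + (gradient (fi i) x - h i)‖ ^ 2 := by rw [hv]
        _ ≤ 2 * ‖Db i‖ ^ 2 + 2 * ‖gradient (fi i) x - h i‖ ^ 2 := page_sq_add _ _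
        _ ≤ _ := by
            rw [norm_sub_rev (gradient (fi i) x)]
            have := hDbnorm i
            linarith
    calc ∫ ω, ‖h' i ω - h i‖ ^ 2 ∂μ
        = ∫ ω, G (T ω) ∂μ := integral_congr_ae (Filter.Eventually.of_forall hpt)
      _ = p * ∑ σ : (Fin n × Fin B) → Fin m, ((m:ℝ)⁻¹) ^ (n * B) * G (true, σ)
          + (1 - p) * ∑ σ : (Fin n × Fin B) → Fin m, ((m:ℝ)⁻¹) ^ (n * B) * G (false, σ) :=
          key G
      _ = p * ‖gradient (fi i) x' - h i‖ ^ 2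
          + (1 - p) * (‖Db i‖ ^ 2 + (m:ℝ)⁻¹ * ∑ ik, ∑ j, ‖gg ik j‖ ^ 2) := by
          rw [Finset.sum_congr rfl (fun σ _ => by rw [htrue σ]), hconst _,
            Finset.sum_congr rfl (fun σ _ => by rw [hfalse σ]),
            hL1' _ gg (hggcent i)]
      _ ≤ ((1 - p) * Lmax ^ 2 / B + 2 * Li i ^ 2) * ‖x' - x‖ ^ 2
          + 2 * p * ‖h i - gradient (fi i) x‖ ^ 2 := by
          rw [hggnorm i]
          have t1 := mul_le_mul_of_nonneg_left hCt hp0.le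
          have t2 := mul_le_mul_of_nonneg_left (add_le_add (hDbnorm i) (hb2 i)) hp1'
          have t3 : p * (Li i ^ 2 * ‖x' - x‖ ^ 2) ≤ Li i ^ 2 * ‖x' - x‖ ^ 2 := by
            have h0 : (0:ℝ) ≤ Li i ^ 2 * ‖x' - x‖ ^ 2 := by positivity
            nlinarith
          ring_nf at t1 t2 t3 ⊢
          linarith
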